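/- arXiv:0710.0144 — 2 statements merged into one kernel-verified Lean document; each statement's English description precedes it below -/
import Mathlib

section
/- If p is an odd prime such that 2 is a primitive root modulo p, then S_p(2^p) = p, where S_p(x) = ∑_{0 ≤ n < x, p | n} (-1)^{σ(n)} and σ(n) is the number of 1's in the binary expansion of n. -/
open Finset

lemma digit_prod (m : ℕ) (z : ℂ) :
    ∑ n ∈ range (2 ^ m), (-1 : ℂ) ^ ((Nat.digits 2 n).sum) * z ^ n
      = ∏ j ∈ range m, (1 - z ^ (2 ^ j)) := by
  induction m generalizing z with
  | zero => simp
  | succ m ih =>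
    have key : ∑ n ∈ range (2 ^ (m + 1)), (-1 : ℂ) ^ ((Nat.digits 2 n).sum) * z ^ n
        = ∑ q ∈ range (2 ^ m), ((-1 : ℂ) ^ ((Nat.digits 2 (2*q)).sum) * z ^ (2*q)
            + (-1 : ℂ) ^ ((Nat.digits 2 (2*q+1)).sum) * z ^ (2*q+1)) := by
      rw [pow_succ, mul_comm (2^m) 2]
      induction (2^m) with
      | zero => simp
      | succ t iht =>
        rw [Nat.mul_succ, Finset.sum_range_succ, Finset.sum_range_succ, Finset.sum_range_succ,
          ← iht]
        ring
    rw [key]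
    have h0 : ∀ q : ℕ, (Nat.digits 2 (2*q)).sum = (Nat.digits 2 q).sum := by
      intro q
      rcases Nat.eq_zero_or_pos q with rfl | hq
      · simp
      · rw [Nat.digits_def' (by norm_num) (by omega)]
        simp [Nat.mul_div_cancel_left q (by norm_num : 0 < 2), Nat.mul_mod_right]
    have h1 : ∀ q : ℕ, (Nat.digits 2 (2*q+1)).sum = (Nat.digits 2 q).sum + 1 := by
      intro q
      rw [Nat.digits_def' (by norm_num) (by omega)]
      have : (2*q+1) % 2 = 1 := by omega
      have h2 : (2*q+1) / 2 = q := by omega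
      rw [List.sum_cons, this, h2, Nat.add_comm]
    have : ∀ q : ℕ, (-1 : ℂ) ^ ((Nat.digits 2 (2*q)).sum) * z ^ (2*q)
            + (-1 : ℂ) ^ ((Nat.digits 2 (2*q+1)).sum) * z ^ (2*q+1)
        = (1 - z) * ((-1 : ℂ) ^ ((Nat.digits 2 q).sum) * (z^2) ^ q) := by
      intro q
      rw [h0, h1, pow_succ, pow_mul]
      ring
    rw [Finset.sum_congr rfl (fun q _ => this q), ← Finset.mul_sum, ih (z^2),
      Finset.prod_range_succ']
    have : ∀ j, (z^2) ^ (2^j) = z ^ (2^(j+1)) := by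
      intro j; rw [← pow_mul, pow_succ, mul_comm 2 (2^j), pow_mul]
    simp only [this, pow_zero, pow_one]
    ring

theorem S_p_two_pow_p_eq_p (p : ℕ) (hp : p.Prime) (hodd : Odd p)
    (h2 : orderOf (2 : ZMod p) = p - 1) :
    (∑ n ∈ Finset.range (2 ^ p),
        if p ∣ n then (-1 : ℤ) ^ ((Nat.digits 2 n).sum) else 0) = p := by
  have hp1 : 1 < p := hp.one_lt
  have hpne : p ≠ 0 := by omega
  haveI : NeZero p := ⟨hpne⟩
  haveI : Fact p.Prime := ⟨hp⟩
  set ζ : ℂ := Complex.exp (2 * Real.pi * Complex.I / p) with hζdef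
  have hζ : IsPrimitiveRoot ζ p := Complex.isPrimitiveRoot_exp p hpne
  have hpC : (p : ℂ) ≠ 0 := Nat.cast_ne_zero.mpr hpne
  -- ζ^a only depends on a mod p
  have hpowmod : ∀ a : ℕ, ζ ^ a = ζ ^ (a % p) := by
    intro a
    conv_lhs => rw [← Nat.div_add_mod a p]
    rw [pow_add, pow_mul, hζ.pow_eq_one, one_pow, one_mul]
  -- orthogonality
  have orth : ∀ n : ℕ, ∑ k ∈ range p, (ζ ^ k) ^ n = if p ∣ n then (p : ℂ) else 0 := by
    intro n
    have hswap : ∀ k : ℕ, (ζ ^ k) ^ n = (ζ ^ n) ^ k := fun k => by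
      rw [← pow_mul, mul_comm, pow_mul]
    simp only [hswap]
    by_cases h : p ∣ n
    · have : ζ ^ n = 1 := (hζ.pow_eq_one_iff_dvd n).mpr h
      simp [h, this]
    · have hne : ζ ^ n ≠ 1 := fun hone => h ((hζ.pow_eq_one_iff_dvd n).mp hone)
      rw [if_neg h, geom_sum_eq hne]
      have : (ζ ^ n) ^ p = 1 := by rw [← pow_mul, mul_comm, pow_mul, hζ.pow_eq_one, one_pow]
      rw [this, sub_self, zero_div]
  -- 2 ≠ 0 in ZMod p
  have h20 : (2 : ZMod p) ≠ 0 := by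
    intro h
    have : ((2 : ℕ) : ZMod p) = 0 := by push_cast; exact h
    have hdvd : p ∣ 2 := (ZMod.natCast_eq_zero_iff 2 p).mp this
    have := Nat.le_of_dvd (by norm_num) hdvd
    interval_cases p
    · exact absurd hodd (by decide)
  have h2p1 : (2 : ZMod p) ^ (p - 1) = 1 := by rw [← h2]; exact pow_orderOf_eq_one _
  -- value of the inner product for nonzero k
  have inner : ∀ k, k < p - 1 →
      ∏ j ∈ range p, (1 - (ζ ^ (k+1)) ^ (2 ^ j)) = (p : ℂ) * (1 - ζ ^ (k+1)) := by
    intro k hk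
    have hkp : k + 1 < p := by omega
    have hk0 : ((k + 1 : ℕ) : ZMod p) ≠ 0 := by
      intro h
      have := (ZMod.natCast_eq_zero_iff (k+1) p).mp h
      have := Nat.le_of_dvd (by omega) this
      omega
    have hform : ∀ j : ℕ, (ζ ^ (k+1)) ^ (2 ^ j) = ζ ^ ((k+1) * 2 ^ j) := fun j => by
      rw [← pow_mul]
    -- split off last factor
    have hsplit : p = (p - 1) + 1 := by omega
    have hrange : range p = range ((p - 1) + 1) := by rw [← hsplit]
    rw [Finset.prod_congr rfl (fun j _ => by rw [hform j])]
    rw [hrange, Finset.prod_range_succ]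
    -- last factor equals 1 - ζ^(k+1)
    have hlast : ζ ^ ((k+1) * 2 ^ (p-1)) = ζ ^ (k+1) := by
      have hcast : (((k+1) * 2 ^ (p-1) : ℕ) : ZMod p) = ((k+1 : ℕ) : ZMod p) := by
        push_cast
        rw [h2p1, mul_one]
      have hmod : ((k+1) * 2 ^ (p-1)) % p = (k+1) % p :=
        (ZMod.natCast_eq_natCast_iff _ _ _).mp hcast
      rw [hpowmod ((k+1) * 2 ^ (p-1)), hmod, ← hpowmod (k+1)]
    rw [hlast]
    congr 1
    -- middle product = p
    -- rewrite each factor using ZMod values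
    have hval : ∀ j : ℕ, ζ ^ ((k+1) * 2 ^ j)
        = ζ ^ ((((k+1 : ℕ) : ZMod p) * 2 ^ j).val) := by
      intro j
      rw [hpowmod ((k+1) * 2 ^ j)]
      congr 1
      have : ((((k+1) * 2 ^ j : ℕ)) : ZMod p) = ((k+1 : ℕ) : ZMod p) * 2 ^ j := by push_cast; ring
      rw [← this, ZMod.val_natCast]
    rw [Finset.prod_congr rfl (fun j _ => by rw [hval j])]
    -- the map j ↦ (k+1) * 2^j is injective on range (p-1) with image univ.erase 0
    set g : ℕ → ZMod p := fun j => ((k+1 : ℕ) : ZMod p) * 2 ^ j with hg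
    have hinj : Set.InjOn g ↑(range (p-1)) := by
      intro a ha b hb hab
      simp only [coe_range, Set.mem_Iio] at ha hb
      have h2ab : (2 : ZMod p) ^ a = (2 : ZMod p) ^ b := mul_left_cancel₀ hk0 hab
      have := pow_injOn_Iio_orderOf (x := (2 : ZMod p))
        (by rw [h2]; exact Set.mem_Iio.mpr ha) (by rw [h2]; exact Set.mem_Iio.mpr hb) h2ab
      exact this
    have himage : (range (p-1)).image g = (univ : Finset (ZMod p)).erase 0 := by
      apply Finset.eq_of_subset_of_card_le
      · intro x hx
        simp only [mem_image] at hx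
        obtain ⟨j, _, rfl⟩ := hx
        refine Finset.mem_erase.mpr ⟨?_, Finset.mem_univ _⟩
        exact mul_ne_zero hk0 (pow_ne_zero _ h20)
      · rw [Finset.card_erase_of_mem (Finset.mem_univ _), Finset.card_univ, ZMod.card,
          Finset.card_image_of_injOn hinj, Finset.card_range]
    have himg : ∏ j ∈ range (p-1), (1 - ζ ^ ((g j).val))
        = ∏ x ∈ (univ : Finset (ZMod p)).erase 0, (1 - ζ ^ x.val) := by
      rw [← himage]
      exact (Finset.prod_image (f := fun x : ZMod p => 1 - ζ ^ x.val)
        (fun a ha b hb hab => hinj (by simpa using ha) (by simpa using hb) hab)).symm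
    rw [himg]
    have hbij : ∏ x ∈ (univ : Finset (ZMod p)).erase 0, (1 - ζ ^ x.val)
        = ∏ i ∈ range (p-1), (1 - ζ ^ (i+1)) := by
      refine Finset.prod_bij' (fun x _ => x.val - 1) (fun i _ => ((i+1 : ℕ) : ZMod p))
        ?_ ?_ ?_ ?_ ?_
      · intro x hx
        have hxne : x ≠ 0 := (Finset.mem_erase.mp hx).1
        have hv : x.val ≠ 0 := fun h => hxne (by rwa [← ZMod.val_eq_zero])
        have := ZMod.val_lt x
        exact Finset.mem_range.mpr (by omega)
      · intro i hi
        have hi' := Finset.mem_range.mp hi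
        refine Finset.mem_erase.mpr ⟨?_, Finset.mem_univ _⟩
        intro h
        have := (ZMod.natCast_eq_zero_iff (i+1) p).mp h
        have := Nat.le_of_dvd (by omega) this
        omega
      · intro x hx
        have hxne : x ≠ 0 := (Finset.mem_erase.mp hx).1
        have hv : x.val ≠ 0 := fun h => hxne (by rwa [← ZMod.val_eq_zero])
        have h1 : x.val - 1 + 1 = x.val := by omega
        rw [h1, ZMod.natCast_val, ZMod.cast_id]
      · intro i hi
        have hi' := Finset.mem_range.mp hi
        rw [ZMod.val_natCast, Nat.mod_eq_of_lt (by omega)]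
        omega
      · intro x hx
        have hxne : x ≠ 0 := (Finset.mem_erase.mp hx).1
        have hv : x.val ≠ 0 := fun h => hxne (by rwa [← ZMod.val_eq_zero])
        have h1 : x.val - 1 + 1 = x.val := by omega
        rw [h1]
    rw [hbij]
    have hprim : IsPrimitiveRoot ζ ((p - 1) + 1) := by rwa [← hsplit]
    rw [IsPrimitiveRoot.prod_one_sub_pow_eq_order hprim]
    rw [Nat.cast_sub (by omega : 1 ≤ p)]
    push_cast
    ring
  -- main computation
  have main : ((∑ n ∈ Finset.range (2 ^ p),
      if p ∣ n then (-1 : ℤ) ^ ((Nat.digits 2 n).sum) else 0 : ℤ) : ℂ) * p = p * p := by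
    push_cast
    rw [Finset.sum_mul]
    have step1 : ∀ n : ℕ, (if p ∣ n then (-1 : ℂ) ^ ((Nat.digits 2 n).sum) else 0) * p
        = ∑ k ∈ range p, (-1 : ℂ) ^ ((Nat.digits 2 n).sum) * (ζ ^ k) ^ n := by
      intro n
      rw [← Finset.mul_sum, orth n]
      split <;> ring
    rw [Finset.sum_congr rfl (fun n _ => step1 n), Finset.sum_comm]
    have step2 : ∀ k : ℕ, ∑ n ∈ range (2 ^ p), (-1 : ℂ) ^ ((Nat.digits 2 n).sum) * (ζ ^ k) ^ n
        = ∏ j ∈ range p, (1 - (ζ ^ k) ^ (2 ^ j)) := fun k => digit_prod p (ζ ^ k)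
    rw [Finset.sum_congr rfl (fun k _ => step2 k)]
    have hsplit : p = (p - 1) + 1 := by omega
    have hrange : range p = range ((p - 1) + 1) := by rw [← hsplit]
    rw [hrange, Finset.sum_range_succ']
    have hzero : ∏ j ∈ range ((p-1)+1), (1 - (ζ ^ 0) ^ (2 ^ j)) = 0 := by
      apply Finset.prod_eq_zero (Finset.mem_range.mpr (Nat.succ_pos _))
      simp
    rw [hzero, add_zero]
    have hstep3 : ∀ k ∈ range (p-1), ∏ j ∈ range ((p-1)+1), (1 - (ζ ^ (k+1)) ^ (2 ^ j))
        = (p : ℂ) * (1 - ζ ^ (k+1)) := by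
      intro k hk
      rw [← hsplit]
      exact inner k (Finset.mem_range.mp hk)
    rw [Finset.sum_congr rfl hstep3, ← Finset.mul_sum]
    have hsum : ∑ k ∈ range (p-1), (1 - ζ ^ (k+1)) = (p : ℂ) := by
      have hgeom : ∑ k ∈ range p, ζ ^ k = 0 := hζ.geom_sum_eq_zero hp1
      rw [hsplit, Finset.sum_range_succ', pow_zero] at hgeom
      rw [Finset.sum_sub_distrib, Finset.sum_const, card_range]
      have h1 : ∑ k ∈ range (p-1), ζ ^ (k+1) = -1 := by linear_combination hgeom
      rw [h1, nsmul_eq_mul, mul_one, Nat.cast_sub (by omega : 1 ≤ p)]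
      push_cast
      ring
    rw [hsum]
  have := mul_right_cancel₀ hpC main
  exact_mod_cast this
end

section
/- For any prime p and integer k ≥ 1, S_p(2^k) = (1/p) ∑_{l=1}^{p-1} ∏_{j=0}^{k-1} (1 - ω^{l·2^j}), where ω is a primitive p-th root of unity and S_p(x) = ∑_{0 ≤ n < x, p | n} (-1)^{σ(n)}. -/
open Finset

lemma digits_len_le_of_lt_pow {k m : ℕ} (hm : m < 2 ^ k) :
    (Nat.digits 2 m).length ≤ k := by
  rcases Nat.eq_zero_or_pos m with rfl | hm0
  · simp
  rw [Nat.digits_len 2 m (by norm_num) hm0.ne']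
  have := (Nat.log_lt_iff_lt_pow (by norm_num) hm0.ne').mpr hm
  omega

lemma digits_sum_add_pow {k m : ℕ} (hm : m < 2 ^ k) :
    (Nat.digits 2 (2 ^ k + m)).sum = (Nat.digits 2 m).sum + 1 := by
  have hL : (Nat.digits 2 m).length ≤ k := digits_len_le_of_lt_pow hm
  have h := Nat.digits_append_zeroes_append_digits
    (b := 2) (k := k - (Nat.digits 2 m).length) (m := 1) (n := m)
    (by norm_num) one_pos
  rw [Nat.add_sub_cancel' hL] at h
  have : Nat.digits 2 (m + 2 ^ k * 1) = Nat.digits 2 (2 ^ k + m) := by ring_nf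
  rw [this] at h
  rw [← h]
  simp

lemma sum_neg_one_pow_mul (ω : ℂ) (l : ℕ) (k : ℕ) :
    ∑ n ∈ range (2 ^ k), (-1 : ℂ) ^ ((Nat.digits 2 n).sum) * ω ^ (l * n) =
      ∏ j ∈ range k, (1 - ω ^ (l * 2 ^ j)) := by
  induction k with
  | zero => simp
  | succ k ih =>
    rw [pow_succ, mul_two, Finset.sum_range_add, prod_range_succ, ← ih]
    have : ∀ m ∈ range (2 ^ k),
        (-1 : ℂ) ^ ((Nat.digits 2 (2 ^ k + m)).sum) * ω ^ (l * (2 ^ k + m)) =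
        -(ω ^ (l * 2 ^ k)) * ((-1 : ℂ) ^ ((Nat.digits 2 m).sum) * ω ^ (l * m)) := by
      intro m hm
      rw [digits_sum_add_pow (mem_range.mp hm), pow_succ, mul_add, pow_add]
      ring
    rw [Finset.sum_congr rfl this, ← Finset.mul_sum]
    ring

lemma roots_sum (p : ℕ) (hp : p.Prime) (ω : ℂ) (hω : IsPrimitiveRoot ω p) (n : ℕ) :
    ∑ l ∈ range p, ω ^ (l * n) = if p ∣ n then (p : ℂ) else 0 := by
  have hcast : ∀ l, ω ^ (l * n) = (ω ^ n) ^ l := fun l => by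
    rw [← pow_mul, mul_comm]
  simp_rw [hcast]
  by_cases h : p ∣ n
  · have : ω ^ n = 1 := hω.pow_eq_one_iff_dvd n |>.mpr h
    simp [this, h]
  · have h1 : ω ^ n ≠ 1 := fun hc => h (hω.pow_eq_one_iff_dvd n |>.mp hc)
    rw [geom_sum_eq h1, ← pow_mul, mul_comm n p, pow_mul, hω.pow_eq_one]
    simp [h]

theorem S_p_two_pow_k_formula (p : ℕ) (hp : p.Prime) (k : ℕ) (hk : 1 ≤ k)
    (ω : ℂ) (hω : IsPrimitiveRoot ω p) :
    (∑ n ∈ Finset.range (2 ^ k),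
        if p ∣ n then (-1 : ℂ) ^ ((Nat.digits 2 n).sum) else 0) =
      (1 / p) * ∑ l ∈ Finset.Icc 1 (p - 1),
        ∏ j ∈ Finset.range k, (1 - ω ^ (l * 2 ^ j)) := by
  have hp0 : (p : ℂ) ≠ 0 := Nat.cast_ne_zero.mpr hp.pos.ne'
  have step1 : ∀ n, (if p ∣ n then (-1 : ℂ) ^ ((Nat.digits 2 n).sum) else 0) =
      (1 / p) * ∑ l ∈ range p, (-1 : ℂ) ^ ((Nat.digits 2 n).sum) * ω ^ (l * n) := by
    intro n
    rw [← Finset.mul_sum, ← mul_assoc, mul_comm ((1:ℂ)/p),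
      mul_assoc, roots_sum p hp ω hω n]
    by_cases h : p ∣ n <;> simp [h, hp0]
  simp_rw [step1]
  rw [← Finset.mul_sum]
  congr 1
  rw [Finset.sum_comm]
  have hsum : ∀ l ∈ range p, ∑ n ∈ range (2 ^ k),
      (-1 : ℂ) ^ ((Nat.digits 2 n).sum) * ω ^ (l * n) =
      ∏ j ∈ range k, (1 - ω ^ (l * 2 ^ j)) :=
    fun l _ => sum_neg_one_pow_mul ω l k
  rw [Finset.sum_congr rfl hsum]
  -- split off l = 0
  have hrange : range p = insert 0 (Finset.Icc 1 (p - 1)) := by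
    ext x
    simp only [mem_range, mem_insert, mem_Icc]
    have := hp.pos
    omega
  rw [hrange, Finset.sum_insert (by simp)]
  have h0 : ∏ j ∈ range k, (1 - ω ^ (0 * 2 ^ j)) = 0 := by
    apply Finset.prod_eq_zero (Finset.mem_range.mpr (by omega : 0 < k))
    simp
  rw [h0, zero_add]
end
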